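/- Let {X_n} be the birth and death chain on ℤ₊ with p(0,1) = 1, p(x,x+1) = p_x ∈ (0,1), p(x,x−1) = q_x = 1 − p_x for x ≥ 1, and p(x,y) = 0 for |x−y| ≠ 1. Suppose lim_{x→∞} p_x = p, lim_{x→∞} q_x = q with p < q. Then the chain is positive recurrent with invariant probability measure π(x) = Z^{−1} ∏_{k=1}^{x} p_{k−1}/q_k (Z the normalizing constant), and it has the spectral gap property: λ₁ := sup{⟨Pf,f⟩_π : f ∈ L²(π), ∑_x f(x)π(x) = 0, ||f||_π = 1} < 1. -/

import Mathlib

open Filter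

set_option maxHeartbeats 1000000 in
/-- For the birth and death chain with `p(0,1) = 1`, `p(x,x+1) = pₓ`,
`p(x,x-1) = qₓ = 1 - pₓ`, if `pₓ → p`, `qₓ → q` with `p < q`, then the chain is positive
recurrent with invariant probability measure `π(x) = Z⁻¹ ∏_{k=1}^x p_{k-1}/q_k`, and it has
the spectral gap property: `λ₁ := sup {⟨Pf,f⟩_π : ∑ₓ f(x)π(x) = 0, ‖f‖_π = 1} < 1`. -/
theorem stmt6 (p q : ℕ → ℝ) (hp0 : p 0 = 1)
    (hp : ∀ x ≥ 1, 0 < p x ∧ p x < 1)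
    (hq : ∀ x ≥ 1, 0 < q x ∧ q x < 1)
    (hpq : ∀ x ≥ 1, p x + q x = 1)
    (pm : ℕ → ℕ → ℝ)
    (hpm : ∀ x y, pm x y = if y = x + 1 then p x else if y + 1 = x then q x else 0)
    (πt : ℕ → ℝ)
    (hπt : ∀ x, πt x = ∏ k ∈ Finset.Icc 1 x, p (k - 1) / q k)
    (π : ℕ → ℝ) (hπ : ∀ x, π x = πt x / ∑' y, πt y)
    (pl ql : ℝ)
    (hpl : Tendsto p atTop (nhds pl))
    (hql : Tendsto q atTop (nhds ql))
    (hlt : pl < ql) :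
    Summable πt ∧
    (∑' x, π x) = 1 ∧
    (∀ y, ∑' x, π x * pm x y = π y) ∧
    sSup {r : ℝ | ∃ f : ℕ → ℝ, (Summable fun x => f x ^ 2 * π x) ∧
        (∑' x, f x * π x) = 0 ∧ (∑' x, f x ^ 2 * π x) = 1 ∧
        r = ∑' x, (∑' y, pm x y * f y) * f x * π x} < 1 := by
  -- basic positivity
  have hppos : ∀ x, 0 < p x := by
    intro x
    rcases Nat.eq_zero_or_pos x with h | h
    · rw [h, hp0]; norm_num
    · exact (hp x h).1
  have hple : ∀ x, p x ≤ 1 := by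
    intro x
    rcases Nat.eq_zero_or_pos x with h | h
    · rw [h, hp0]
    · exact le_of_lt (hp x h).2
  have hqpos : ∀ x ≥ 1, 0 < q x := fun x hx => (hq x hx).1
  have hπtpos : ∀ x, 0 < πt x := by
    intro x
    rw [hπt]
    apply Finset.prod_pos
    intro k hk
    have hk1 : 1 ≤ k := (Finset.mem_Icc.mp hk).1
    exact div_pos (hppos _) (hqpos k hk1)
  have hrec : ∀ x, πt (x + 1) = πt x * (p x / q (x + 1)) := by
    intro x
    rw [hπt, hπt, Finset.prod_Icc_succ_top (Nat.le_add_left 1 x)]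
    simp
  -- limits
  have hpl0 : 0 ≤ pl := ge_of_tendsto' hpl (fun x => (hppos x).le)
  have hql0 : 0 < ql := lt_of_le_of_lt hpl0 hlt
  set θ : ℝ := (pl / ql + 1) / 2 with hθdef
  have hrat1 : pl / ql < 1 := (div_lt_one hql0).mpr hlt
  have hrat0 : 0 ≤ pl / ql := div_nonneg hpl0 hql0.le
  have hθ0 : 0 < θ := by rw [hθdef]; linarith
  have hθ1 : θ < 1 := by rw [hθdef]; linarith
  have hratθ : pl / ql < θ := by rw [hθdef]; linarith
  -- T x := p x / q (x+1) tends to pl / ql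
  have hT : Tendsto (fun x => p x / q (x + 1)) atTop (nhds (pl / ql)) := by
    exact Tendsto.div hpl (hql.comp (tendsto_add_atTop_nat 1)) hql0.ne'
  obtain ⟨N, hN⟩ : ∃ N, ∀ x ≥ N, p x / q (x + 1) ≤ θ := by
    have := hT.eventually (eventually_le_nhds hratθ)
    exact eventually_atTop.mp this
  -- summability of πt
  have hsum : Summable πt := by
    apply summable_of_ratio_norm_eventually_le hθ1
    filter_upwards [eventually_ge_atTop N] with n hn
    rw [hrec n]
    rw [Real.norm_eq_abs, Real.norm_eq_abs, abs_mul,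
      abs_of_pos (hπtpos n)]
    have h1 : |p n / q (n + 1)| = p n / q (n + 1) := abs_of_pos (div_pos (hppos n) (hqpos _ (Nat.le_add_left 1 n)))
    rw [h1, mul_comm]
    exact mul_le_mul_of_nonneg_right (hN n hn) (hπtpos n).le
  -- normalizing constant
  set Z : ℝ := ∑' y, πt y with hZdef
  have hZpos : 0 < Z := Summable.tsum_pos hsum (fun i => (hπtpos i).le) 0 (hπtpos 0)
  have hπeq : ∀ x, π x = πt x / Z := fun x => hπ x
  have hπpos : ∀ x, 0 < π x := fun x => (hπeq x) ▸ div_pos (hπtpos x) hZpos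
  have hπsum : Summable π := (hsum.div_const Z).congr (fun x => (hπeq x).symm)
  have hπone : (∑' x, π x) = 1 := by
    have : (fun x => π x) = fun x => πt x / Z := funext hπeq
    rw [tsum_congr hπeq, tsum_div_const, ← hZdef, div_self hZpos.ne']
  -- detailed balance
  have hdb : ∀ x, πt x * p x = πt (x + 1) * q (x + 1) := by
    intro x
    rw [hrec x]
    have := (hqpos (x + 1) (Nat.le_add_left 1 x)).ne'
    field_simp
  have hdbπ : ∀ x, π x * p x = π (x + 1) * q (x + 1) := by
    intro x
    rw [hπeq, hπeq, div_mul_eq_mul_div, div_mul_eq_mul_div, hdb]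
  -- part 3 : invariance
  have hinv : ∀ y, ∑' x, π x * pm x y = π y := by
    intro y
    match y with
    | 0 =>
      have h0 : ∀ x ∉ ({1} : Finset ℕ), π x * pm x 0 = 0 := by
        intro x hx
        simp only [Finset.mem_singleton] at hx
        rw [hpm]
        have h1 : ¬ (0 = x + 1) := by omega
        have h2 : ¬ (0 + 1 = x) := by omega
        simp [h1, h2]
      rw [tsum_eq_sum h0, Finset.sum_singleton, hpm]
      norm_num
      have := hdbπ 0
      rw [hp0, mul_one] at this
      rw [← this]
    | z + 1 =>
      have hzne : z ≠ z + 2 := by omega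
      have h0 : ∀ x ∉ ({z, z + 2} : Finset ℕ), π x * pm x (z + 1) = 0 := by
        intro x hx
        simp only [Finset.mem_insert, Finset.mem_singleton] at hx
        push_neg at hx
        rw [hpm]
        have h1 : ¬ (z + 1 = x + 1) := by omega
        have h2 : ¬ (z + 1 + 1 = x) := by omega
        simp [h1, h2, Ne.symm hx.1]
      rw [tsum_eq_sum h0, Finset.sum_insert (by simpa using hzne), Finset.sum_singleton,
        hpm, hpm]
      have h2 : ¬ (z + 1 = z + 2 + 1) := by omega
      norm_num [h2]
      have hd1 := hdbπ z
      have hd2 : π (z + 1) * p (z + 1) = π (z + 2) * q (z + 2) := hdbπ (z + 1)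
      have hpq1 := hpq (z + 1) (Nat.le_add_left 1 z)
      linear_combination hd1 - hd2 + π (z + 1) * hpq1
  refine ⟨hsum, hπone, hinv, ?_⟩
  -- uniform lower bound on q
  obtain ⟨qe, hqe0, hqe⟩ : ∃ qe : ℝ, 0 < qe ∧ ∀ x ≥ 1, qe ≤ q x := by
    obtain ⟨N₁, hN₁⟩ : ∃ N₁, ∀ x ≥ N₁, ql / 2 ≤ q x :=
      eventually_atTop.mp (hql.eventually (eventually_ge_nhds (by linarith)))
    classical
    set s : Finset ℝ := insert (ql / 2) ((Finset.Icc 1 N₁).image q) with hs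
    have hsne : s.Nonempty := ⟨ql / 2, Finset.mem_insert_self _ _⟩
    refine ⟨s.min' hsne, ?_, ?_⟩
    · rw [Finset.lt_min'_iff]
      intro y hy
      rcases Finset.mem_insert.mp hy with h | h
      · rw [h]; linarith
      · obtain ⟨j, hj, rfl⟩ := Finset.mem_image.mp h
        exact hqpos j (Finset.mem_Icc.mp hj).1
    · intro x hx
      rcases le_or_gt x N₁ with h | h
      · exact Finset.min'_le _ _ (Finset.mem_insert_of_mem
          (Finset.mem_image.mpr ⟨x, Finset.mem_Icc.mpr ⟨hx, h⟩, rfl⟩))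
      · exact le_trans (Finset.min'_le _ _ (Finset.mem_insert_self _ _)) (hN₁ x h.le)
  -- one_le_prod helper
  have one_le_prod : ∀ (s : Finset ℕ) (g : ℕ → ℝ), (∀ j ∈ s, 1 ≤ g j) → 1 ≤ ∏ j ∈ s, g j := by
    intro s g hg
    refine Finset.prod_induction g (fun z => 1 ≤ z) (fun a b ha hb => ?_) le_rfl hg
    nlinarith
  have prod_nonneg' : ∀ (s : Finset ℕ) (g : ℕ → ℝ), (∀ j ∈ s, 0 ≤ g j) → 0 ≤ ∏ j ∈ s, g j :=
    fun s g hg => Finset.prod_nonneg hg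
  -- the exceptional constant
  set M : ℕ → ℝ := fun j => max (p j / q (j + 1)) θ with hM
  have hMθ : ∀ j, θ ≤ M j := fun j => le_max_right _ _
  have hMpos : ∀ j, 0 < M j := fun j => lt_of_lt_of_le hθ0 (hMθ j)
  have hMeq : ∀ j, N ≤ j → M j = θ := fun j hj => max_eq_right (hN j hj)
  set CN : ℝ := ∏ j ∈ Finset.range N, (M j / θ) with hCN
  have hCN1 : 1 ≤ CN := one_le_prod _ _ (fun j _ => (one_le_div hθ0).mpr (hMθ j))
  have hCNpos : 0 < CN := lt_of_lt_of_le one_pos hCN1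
  set Cc : ℝ := CN / (qe * θ) with hCc
  have hCcpos : 0 < Cc := div_pos hCNpos (mul_pos hqe0 hθ0)
  -- step bound by induction
  have hstep : ∀ k x, k + 1 ≤ x →
      πt x ≤ (1 / qe) * (∏ j ∈ Finset.Ico (k + 1) x, M j) * (πt k * p k) := by
    intro k x hkx
    induction x, hkx using Nat.le_induction with
    | base =>
      rw [Finset.Ico_self, Finset.prod_empty]
      rw [hrec k]
      have hq1 : qe ≤ q (k + 1) := hqe _ (Nat.le_add_left 1 k)
      have h : p k / q (k + 1) ≤ p k / qe :=
        div_le_div_of_nonneg_left (hppos k).le hqe0 hq1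
      calc πt k * (p k / q (k + 1)) ≤ πt k * (p k / qe) :=
            mul_le_mul_of_nonneg_left h (hπtpos k).le
        _ = 1 / qe * 1 * (πt k * p k) := by ring
    | succ x hx ih =>
      rw [hrec x, Finset.prod_Ico_succ_top hx]
      have h1 : p x / q (x + 1) ≤ M x := le_max_left _ _
      have hr0 : 0 ≤ p x / q (x + 1) :=
        (div_pos (hppos x) (hqpos _ (Nat.le_add_left 1 x))).le
      have hP0 : 0 ≤ ∏ j ∈ Finset.Ico (k + 1) x, M j :=
        prod_nonneg' _ _ (fun j _ => (hMpos j).le)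
      have hA0 : 0 ≤ 1 / qe * (∏ j ∈ Finset.Ico (k + 1) x, M j) * (πt k * p k) := by
        have := mul_pos (hπtpos k) (hppos k)
        positivity
      calc πt x * (p x / q (x + 1))
          ≤ (1 / qe * (∏ j ∈ Finset.Ico (k + 1) x, M j) * (πt k * p k)) * M x :=
            mul_le_mul ih h1 hr0 hA0
        _ = 1 / qe * ((∏ j ∈ Finset.Ico (k + 1) x, M j) * M x) * (πt k * p k) := by ring
  -- product bound
  have hprod : ∀ k x, k + 1 ≤ x →
      (∏ j ∈ Finset.Ico (k + 1) x, M j) ≤ θ ^ (x - (k + 1)) * CN := by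
    intro k x hkx
    classical
    have h1 : (∏ j ∈ Finset.Ico (k + 1) x, M j)
        = θ ^ (x - (k + 1)) * ∏ j ∈ Finset.Ico (k + 1) x, (M j / θ) := by
      have e1 : ∀ j ∈ Finset.Ico (k + 1) x, M j = θ * (M j / θ) := by
        intro j _
        rw [mul_comm, div_mul_cancel₀ _ hθ0.ne']
      rw [Finset.prod_congr rfl e1, Finset.prod_mul_distrib, Finset.prod_const,
        Nat.card_Ico]
    have h2 : (∏ j ∈ Finset.Ico (k + 1) x, (M j / θ))
        = ∏ j ∈ (Finset.Ico (k + 1) x ∩ Finset.range N), (M j / θ) := by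
      refine (Finset.prod_subset Finset.inter_subset_left ?_).symm
      intro j hj hj2
      have hjN : N ≤ j := by
        by_contra h
        exact hj2 (Finset.mem_inter.mpr ⟨hj, Finset.mem_range.mpr (by omega)⟩)
      rw [hMeq j hjN, div_self hθ0.ne']
    have h3 : (∏ j ∈ (Finset.Ico (k + 1) x ∩ Finset.range N), (M j / θ)) ≤ CN := by
      have key := Finset.prod_inter_mul_prod_diff (Finset.range N) (Finset.Ico (k + 1) x)
        (fun j => M j / θ)
      have hcomm : Finset.range N ∩ Finset.Ico (k + 1) x
          = Finset.Ico (k + 1) x ∩ Finset.range N := Finset.inter_comm _ _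
      rw [hcomm] at key
      have h4 : 1 ≤ ∏ j ∈ (Finset.range N \ Finset.Ico (k + 1) x), (M j / θ) :=
        one_le_prod _ _ (fun j _ => (one_le_div hθ0).mpr (hMθ j))
      have h5 : 0 ≤ ∏ j ∈ (Finset.Ico (k + 1) x ∩ Finset.range N), (M j / θ) :=
        prod_nonneg' _ _ (fun j _ => (div_pos (hMpos j) hθ0).le)
      calc (∏ j ∈ (Finset.Ico (k + 1) x ∩ Finset.range N), (M j / θ))
          ≤ (∏ j ∈ (Finset.Ico (k + 1) x ∩ Finset.range N), (M j / θ))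
            * ∏ j ∈ (Finset.range N \ Finset.Ico (k + 1) x), (M j / θ) :=
            le_mul_of_one_le_right h5 h4
        _ = CN := key
    rw [h1]
    exact mul_le_mul_of_nonneg_left (h2 ▸ h3) (pow_nonneg hθ0.le _)
  -- Claim C
  have hC : ∀ k x, k < x → πt x ≤ Cc * θ ^ (x - k) * (πt k * p k) := by
    intro k x hkx
    have hkx' : k + 1 ≤ x := hkx
    have hW0 : 0 ≤ πt k * p k := (mul_pos (hπtpos k) (hppos k)).le
    calc πt x ≤ 1 / qe * (∏ j ∈ Finset.Ico (k + 1) x, M j) * (πt k * p k) :=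
          hstep k x hkx'
      _ ≤ 1 / qe * (θ ^ (x - (k + 1)) * CN) * (πt k * p k) := by
          apply mul_le_mul_of_nonneg_right _ hW0
          exact mul_le_mul_of_nonneg_left (hprod k x hkx') (by positivity)
      _ = Cc * θ ^ (x - k) * (πt k * p k) := by
          have hxk : x - k = (x - (k + 1)) + 1 := by omega
          rw [hxk, pow_succ, hCc]
          field_simp
  have hCπ : ∀ k x, k < x → π x ≤ Cc * θ ^ (x - k) * (π k * p k) := by
    intro k x hkx
    rw [hπeq, hπeq]
    have h := hC k x hkx
    calc πt x / Z ≤ (Cc * θ ^ (x - k) * (πt k * p k)) / Z := by gcongr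
      _ = Cc * θ ^ (x - k) * (πt k / Z * p k) := by ring
  -- geometric constants
  set v : ℝ := (1 + θ) / 2 with hvdef
  have hv0 : 0 < v := by rw [hvdef]; linarith
  have hθv : θ < v := by rw [hvdef]; linarith
  have hv1 : v < 1 := by rw [hvdef]; linarith
  set η : ℝ := θ / v with hηdef
  have hη0 : 0 < η := div_pos hθ0 hv0
  have hη1 : η < 1 := (div_lt_one hv0).mpr hθv
  have hgeo : ∀ (u : ℝ), 0 < u → u < 1 → ∀ n,
      (∑ k ∈ Finset.range n, u ^ (n - k)) ≤ u / (1 - u) := by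
    intro u hu0 hu1 n
    have h3 : (∑ j ∈ Finset.range n, u ^ j) ≤ (1 - u)⁻¹ := by
      have := Summable.sum_le_tsum (Finset.range n) (fun i _ => pow_nonneg hu0.le i)
        (summable_geometric_of_lt_one hu0.le hu1)
      rwa [tsum_geometric_of_lt_one hu0.le hu1] at this
    calc (∑ k ∈ Finset.range n, u ^ (n - k))
        = ∑ j ∈ Finset.range n, u ^ ((n - 1 - j) + 1) := by
          exact Finset.sum_congr rfl (fun j hj => by
            have := Finset.mem_range.mp hj
            congr 1
            omega)
      _ = ∑ j ∈ Finset.range n, u ^ (j + 1) :=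
          Finset.sum_range_reflect (fun j => u ^ (j + 1)) n
      _ = u * ∑ j ∈ Finset.range n, u ^ j := by
          rw [Finset.mul_sum]
          exact Finset.sum_congr rfl (fun j _ => by ring)
      _ ≤ u * (1 - u)⁻¹ := mul_le_mul_of_nonneg_left h3 hu0.le
      _ = u / (1 - u) := by rw [div_eq_mul_inv]
  have hgeo2 : ∀ k n, (∑ x ∈ Finset.range n, if k < x then v ^ (x - k) else 0)
      ≤ v / (1 - v) := by
    intro k n
    have hterm : ∀ x, (if k < x then v ^ (x - k) else 0)
        = (if k < x then v ^ x else 0) / v ^ k := by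
      intro x
      by_cases h : k < x
      · simp only [if_pos h]
        rw [pow_sub₀ v hv0.ne' h.le, div_eq_mul_inv]
      · simp [h]
    have hsummable : Summable (fun x => if k < x then v ^ x else 0) := by
      apply Summable.of_nonneg_of_le (fun x => by positivity)
        (fun x => ?_) (summable_geometric_of_lt_one hv0.le hv1)
      by_cases h : k < x
      · simp [h]
      · simp [h]
        positivity
    have htail : (∑' (i : ℕ), if k < i + (k + 1) then v ^ (i + (k + 1)) else 0)
        = (1 - v)⁻¹ * v ^ (k + 1) := by
      have e1 : ∀ i : ℕ, (if k < i + (k + 1) then v ^ (i + (k + 1)) else 0)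
          = v ^ i * v ^ (k + 1) := by
        intro i
        rw [if_pos (by omega), pow_add]
      rw [tsum_congr e1, tsum_mul_right, tsum_geometric_of_lt_one hv0.le hv1]
    have htsum : (∑' x, if k < x then v ^ x else 0) = v ^ (k + 1) * (1 - v)⁻¹ := by
      have e := Summable.sum_add_tsum_nat_add (f := fun x => if k < x then v ^ x else 0)
        (k + 1) hsummable
      have e0 : (∑ i ∈ Finset.range (k + 1), (if k < i then v ^ i else 0)) = 0 := by
        apply Finset.sum_eq_zero
        intro i hi
        rw [if_neg (by have := Finset.mem_range.mp hi; omega)]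
      rw [e0, zero_add] at e
      rw [← e, htail]
      ring
    calc (∑ x ∈ Finset.range n, if k < x then v ^ (x - k) else 0)
        = (∑ x ∈ Finset.range n, if k < x then v ^ x else 0) / v ^ k := by
          rw [Finset.sum_div]
          exact Finset.sum_congr rfl (fun x _ => hterm x)
      _ ≤ (v ^ (k + 1) * (1 - v)⁻¹) / v ^ k := by
          apply div_le_div_of_nonneg_right ?_ (pow_pos hv0 k).le
          rw [← htsum]
          exact Summable.sum_le_tsum _ (fun i _ => by positivity) hsummable
      _ = v / (1 - v) := by
          have hk0 : (v : ℝ) ^ k ≠ 0 := (pow_pos hv0 k).ne'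
          rw [pow_succ, div_eq_iff hk0, div_eq_mul_inv]
          ring
  set Kb : ℝ := Cc * (η / (1 - η)) with hKb
  have hKb0 : 0 < Kb := mul_pos hCcpos (div_pos hη0 (by linarith))
  set KD : ℝ := Kb * (v / (1 - v)) with hKD
  have hKD0 : 0 < KD := mul_pos hKb0 (div_pos hv0 (by linarith))
  -- main bound for each admissible f
  have hmain : ∀ r ∈ {r : ℝ | ∃ f : ℕ → ℝ, (Summable fun x => f x ^ 2 * π x) ∧
      (∑' x, f x * π x) = 0 ∧ (∑' x, f x ^ 2 * π x) = 1 ∧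
      r = ∑' x, (∑' y, pm x y * f y) * f x * π x}, r ≤ 1 - 1 / KD := by
    rintro r ⟨f, hfs, hfmean, hfnorm, hfr⟩
    set w : ℕ → ℝ := fun k => π k * p k with hw
    have hwpos : ∀ k, 0 < w k := fun k => mul_pos (hπpos k) (hppos k)
    have hwdb : ∀ k, w k = π (k + 1) * q (k + 1) := fun k => hdbπ k
    have hqle1 : ∀ k, q (k + 1) ≤ 1 := fun k => (hq _ (Nat.le_add_left 1 k)).2.le
    have ha' : Summable (fun x => f (x + 1) ^ 2 * π (x + 1)) :=
      (summable_nat_add_iff 1).mpr hfs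
    have hs1 : Summable (fun x => f x ^ 2 * w x) := by
      apply Summable.of_nonneg_of_le
        (fun x => mul_nonneg (sq_nonneg _) (hwpos x).le) (fun x => ?_) hfs
      have h1 : w x ≤ π x := mul_le_of_le_one_right (hπpos x).le (hple x)
      exact mul_le_mul_of_nonneg_left h1 (sq_nonneg (f x))
    have hs2 : Summable (fun x => f (x + 1) ^ 2 * w x) := by
      apply Summable.of_nonneg_of_le
        (fun x => mul_nonneg (sq_nonneg _) (hwpos x).le) (fun x => ?_) ha'
      rw [hwdb x]
      have h1 : π (x + 1) * q (x + 1) ≤ π (x + 1) :=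
        mul_le_of_le_one_right (hπpos _).le (hqle1 x)
      exact mul_le_mul_of_nonneg_left h1 (sq_nonneg (f (x + 1)))
    have habs2 : ∀ a b : ℝ, |a * b| ≤ (a ^ 2 + b ^ 2) / 2 := by
      intro a b
      rw [abs_le]
      constructor <;> nlinarith [sq_nonneg (a + b), sq_nonneg (a - b)]
    have hcS : Summable (fun x => f x * f (x + 1) * w x) := by
      have h : Summable (fun x => |f x * f (x + 1) * w x|) := by
        apply Summable.of_nonneg_of_le (fun x => abs_nonneg _) (fun x => ?_)
          ((hs1.add hs2).div_const 2)
        rw [abs_mul, abs_of_pos (hwpos x)]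
        calc |f x * f (x + 1)| * w x
            ≤ ((f x ^ 2 + f (x + 1) ^ 2) / 2) * w x :=
              mul_le_mul_of_nonneg_right (habs2 _ _) (hwpos x).le
          _ = (f x ^ 2 * w x + f (x + 1) ^ 2 * w x) / 2 := by ring
      exact h.of_abs
    set d : ℕ → ℝ := fun k => w k * (f (k + 1) - f k) ^ 2 with hdd
    have hdnn : ∀ k, 0 ≤ d k := fun k => mul_nonneg (hwpos k).le (sq_nonneg _)
    have hdS : Summable d := by
      apply Summable.of_nonneg_of_le hdnn (fun x => ?_)
        ((hs1.mul_left 2).add (hs2.mul_left 2))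
      simp only [hdd]
      nlinarith [sq_nonneg (f (x + 1) + f x), (hwpos x).le,
        mul_nonneg (hwpos x).le (sq_nonneg (f (x + 1) + f x))]
    set D : ℝ := ∑' k, d k with hDD
    -- value of P f at x
    have hPfval : ∀ x, (∑' y, pm x y * f y)
        = p x * f (x + 1) + (if x = 0 then 0 else q x * f (x - 1)) := by
      intro x
      match x with
      | 0 =>
        have h0 : ∀ y ∉ ({1} : Finset ℕ), pm 0 y * f y = 0 := by
          intro y hy
          simp only [Finset.mem_singleton] at hy
          rw [hpm]
          have h1 : ¬ (y = 0 + 1) := by omega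
          have h2 : ¬ (y + 1 = 0) := by omega
          simp [h1, h2]
        rw [tsum_eq_sum h0, Finset.sum_singleton, hpm]
        norm_num
      | k + 1 =>
        have hne : (k + 2 : ℕ) ≠ k := by omega
        have h0 : ∀ y ∉ ({k + 2, k} : Finset ℕ), pm (k + 1) y * f y = 0 := by
          intro y hy
          simp only [Finset.mem_insert, Finset.mem_singleton] at hy
          push_neg at hy
          rw [hpm]
          have h1 : ¬ (y = k + 1 + 1) := by omega
          have h2 : ¬ (y + 1 = k + 1) := by omega
          simp [h1, h2, hy.2]
        rw [tsum_eq_sum h0, Finset.sum_insert (by simpa using hne), Finset.sum_singleton,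
          hpm, hpm]
        have h1 : (k + 2 = k + 1 + 1) := rfl
        have h2 : ¬ (k = k + 1 + 1) := by omega
        have h3 : (k + 1 = k + 1) := rfl
        norm_num [h2]
    set c : ℕ → ℝ := fun x => f x * f (x + 1) * w x with hcc
    set e : ℕ → ℝ := fun x => (if x = 0 then 0 else q x * f (x - 1)) * f x * π x with hee
    have he1 : ∀ x, e (x + 1) = c x := by
      intro x
      simp only [hee, hcc, if_neg (Nat.succ_ne_zero x), Nat.add_sub_cancel]
      rw [hwdb x]
      ring
    have heS : Summable e :=
      (summable_nat_add_iff 1).mp (hcS.congr (fun x => (he1 x).symm))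
    have heT : ∑' x, e x = ∑' x, c x := by
      rw [Summable.tsum_eq_zero_add heS]
      have h0 : e 0 = 0 := by simp [hee]
      rw [h0, zero_add]
      exact tsum_congr he1
    have hrr : r = 2 * ∑' x, c x := by
      rw [hfr]
      have hpt : ∀ x, (∑' y, pm x y * f y) * f x * π x = c x + e x := by
        intro x
        rw [hPfval x]
        simp only [hcc, hee, hw]
        ring
      rw [tsum_congr hpt, Summable.tsum_add hcS heS, heT]
      ring
    -- norm splitting
    set a2 : ℕ → ℝ := fun x => (if x = 0 then 0 else q x) * f x ^ 2 * π x with ha2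
    have ha2eq : ∀ x, a2 (x + 1) = f (x + 1) ^ 2 * w x := by
      intro x
      simp only [ha2, if_neg (Nat.succ_ne_zero x)]
      rw [hwdb x]
      ring
    have ha2S : Summable a2 :=
      (summable_nat_add_iff 1).mp (hs2.congr (fun x => (ha2eq x).symm))
    have ha2T : ∑' x, a2 x = ∑' x, f (x + 1) ^ 2 * w x := by
      rw [Summable.tsum_eq_zero_add ha2S]
      have h0 : a2 0 = 0 := by simp [ha2]
      rw [h0, zero_add]
      exact tsum_congr ha2eq
    have hnorm2 : (1 : ℝ) = (∑' x, f x ^ 2 * w x) + ∑' x, f (x + 1) ^ 2 * w x := by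
      rw [← hfnorm]
      have hpt : ∀ x, f x ^ 2 * π x = f x ^ 2 * w x + a2 x := by
        intro x
        match x with
        | 0 => simp [ha2, hw, hp0]
        | k + 1 =>
          have h := hpq (k + 1) (Nat.le_add_left 1 k)
          simp only [ha2, hw, if_neg (Nat.succ_ne_zero k)]
          linear_combination (f (k + 1) ^ 2 * π (k + 1)) * h.symm
      rw [tsum_congr hpt, Summable.tsum_add hs1 ha2S, ha2T]
    have hDval : D = 1 - r := by
      have hpt : ∀ k, d k = f (k + 1) ^ 2 * w k + f k ^ 2 * w k - 2 * c k := by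
        intro k
        simp only [hdd, hcc]
        ring
      calc D = ∑' k, (f (k + 1) ^ 2 * w k + f k ^ 2 * w k - 2 * c k) := tsum_congr hpt
        _ = ((∑' k, f (k + 1) ^ 2 * w k) + ∑' k, f k ^ 2 * w k) - ∑' k, 2 * c k := by
            rw [Summable.tsum_sub (hs2.add hs1) (hcS.mul_left 2), Summable.tsum_add hs2 hs1]
        _ = 1 - r := by
            rw [tsum_mul_left, hrr]
            linarith [hnorm2]
    -- mean zero function g
    have hfπS : Summable (fun x => f x * π x) := by
      have h : Summable (fun x => |f x * π x|) := by
        apply Summable.of_nonneg_of_le (fun x => abs_nonneg _) (fun x => ?_)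
          ((hfs.add hπsum).div_const 2)
        rw [abs_mul, abs_of_pos (hπpos x)]
        have h1 : |f x| ≤ (f x ^ 2 + 1) / 2 := by
          nlinarith [sq_nonneg (|f x| - 1), sq_abs (f x), abs_nonneg (f x)]
        calc |f x| * π x ≤ ((f x ^ 2 + 1) / 2) * π x :=
              mul_le_mul_of_nonneg_right h1 (hπpos x).le
          _ = (f x ^ 2 * π x + π x) / 2 := by ring
      exact h.of_abs
    set g : ℕ → ℝ := fun x => f x - f 0 with hg
    have hgS : Summable (fun x => π x * g x ^ 2) := by
      apply Summable.congr
        (f := fun x => f x ^ 2 * π x - (2 * f 0) * (f x * π x) + f 0 ^ 2 * π x)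
        ((hfs.sub (hfπS.mul_left (2 * f 0))).add (hπsum.mul_left (f 0 ^ 2)))
      intro x
      simp only [hg]
      ring
    have hgT : ∑' x, π x * g x ^ 2 = 1 + f 0 ^ 2 := by
      calc ∑' x, π x * g x ^ 2
          = ∑' x, (f x ^ 2 * π x - (2 * f 0) * (f x * π x) + f 0 ^ 2 * π x) :=
            tsum_congr (fun x => by simp only [hg]; ring)
        _ = ((∑' x, f x ^ 2 * π x) - ∑' x, (2 * f 0) * (f x * π x))
            + ∑' x, f 0 ^ 2 * π x := by
            rw [Summable.tsum_add (hfs.sub (hfπS.mul_left _)) (hπsum.mul_left _),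
              Summable.tsum_sub hfs (hfπS.mul_left _)]
        _ = 1 + f 0 ^ 2 := by
            rw [hfnorm, tsum_mul_left, tsum_mul_left, hfmean, hπone]
            ring
    -- per-x Cauchy-Schwarz
    have hkey : ∀ x, π x * g x ^ 2 ≤ Kb * ∑ k ∈ Finset.range x, v ^ (x - k) * d k := by
      intro x
      set sq : ℕ → ℝ := fun k => Real.sqrt (v ^ (x - k) * w k) with hsq
      have hsqpos : ∀ k, 0 < sq k :=
        fun k => Real.sqrt_pos.mpr (mul_pos (pow_pos hv0 _) (hwpos k))
      have htele : g x = ∑ k ∈ Finset.range x,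
          ((sq k * (f (k + 1) - f k)) * (sq k)⁻¹) := by
        rw [hg]
        simp only
        rw [← Finset.sum_range_sub f x]
        refine Finset.sum_congr rfl (fun k _ => ?_)
        rw [mul_comm (sq k) _, mul_assoc, mul_inv_cancel₀ (hsqpos k).ne', mul_one]
      have hCS := Finset.sum_mul_sq_le_sq_mul_sq (Finset.range x)
        (fun k => sq k * (f (k + 1) - f k)) (fun k => (sq k)⁻¹)
      have hF2 : ∀ k, (sq k * (f (k + 1) - f k)) ^ 2 = v ^ (x - k) * d k := by
        intro k
        rw [mul_pow, hsq]
        simp only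
        rw [Real.sq_sqrt (mul_pos (pow_pos hv0 (x - k)) (hwpos k)).le]
        simp only [hdd]
        ring
      have hG2 : ∀ k, ((sq k)⁻¹) ^ 2 = (v ^ (x - k) * w k)⁻¹ := by
        intro k
        rw [inv_pow, hsq]
        simp only
        rw [Real.sq_sqrt (mul_pos (pow_pos hv0 (x - k)) (hwpos k)).le]
      have hgx2 : g x ^ 2 ≤ (∑ k ∈ Finset.range x, v ^ (x - k) * d k)
          * (∑ k ∈ Finset.range x, (v ^ (x - k) * w k)⁻¹) := by
        rw [htele]
        calc (∑ k ∈ Finset.range x, ((sq k * (f (k + 1) - f k)) * (sq k)⁻¹)) ^ 2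
            ≤ (∑ k ∈ Finset.range x, (sq k * (f (k + 1) - f k)) ^ 2)
              * (∑ k ∈ Finset.range x, ((sq k)⁻¹) ^ 2) := hCS
          _ = (∑ k ∈ Finset.range x, v ^ (x - k) * d k)
              * (∑ k ∈ Finset.range x, (v ^ (x - k) * w k)⁻¹) := by
              rw [Finset.sum_congr rfl (fun k _ => hF2 k),
                Finset.sum_congr rfl (fun k _ => hG2 k)]
      have hB : π x * (∑ k ∈ Finset.range x, (v ^ (x - k) * w k)⁻¹) ≤ Kb := by
        rw [Finset.mul_sum]
        have hterm : ∀ k ∈ Finset.range x,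
            π x * (v ^ (x - k) * w k)⁻¹ ≤ Cc * η ^ (x - k) := by
          intro k hk
          have hkx := Finset.mem_range.mp hk
          have hCk : π x ≤ Cc * θ ^ (x - k) * w k := hCπ k x hkx
          have hwk := hwpos k
          have hvk : (0 : ℝ) < v ^ (x - k) := pow_pos hv0 _
          calc π x * (v ^ (x - k) * w k)⁻¹
              ≤ (Cc * θ ^ (x - k) * w k) * (v ^ (x - k) * w k)⁻¹ :=
                mul_le_mul_of_nonneg_right hCk
                  (inv_nonneg.mpr (mul_pos (pow_pos hv0 _) (hwpos k)).le)
            _ = Cc * η ^ (x - k) := by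
                have hηm : η ^ (x - k) = θ ^ (x - k) * (v ^ (x - k))⁻¹ := by
                  rw [hηdef, div_pow, div_eq_mul_inv]
                rw [hηm, mul_inv,
                  show Cc * θ ^ (x - k) * w k * ((v ^ (x - k))⁻¹ * (w k)⁻¹)
                  = Cc * (θ ^ (x - k) * (v ^ (x - k))⁻¹) * (w k * (w k)⁻¹) from by ring,
                  mul_inv_cancel₀ hwk.ne', mul_one]
        calc ∑ k ∈ Finset.range x, π x * (v ^ (x - k) * w k)⁻¹
            ≤ ∑ k ∈ Finset.range x, Cc * η ^ (x - k) := Finset.sum_le_sum hterm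
          _ = Cc * ∑ k ∈ Finset.range x, η ^ (x - k) := by rw [Finset.mul_sum]
          _ ≤ Cc * (η / (1 - η)) :=
              mul_le_mul_of_nonneg_left (hgeo η hη0 hη1 x) hCcpos.le
          _ = Kb := hKb.symm
      have hA0 : 0 ≤ ∑ k ∈ Finset.range x, v ^ (x - k) * d k :=
        Finset.sum_nonneg (fun k _ => mul_nonneg (pow_nonneg hv0.le _) (hdnn k))
      calc π x * g x ^ 2
          ≤ π x * ((∑ k ∈ Finset.range x, v ^ (x - k) * d k)
            * (∑ k ∈ Finset.range x, (v ^ (x - k) * w k)⁻¹)) :=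
            mul_le_mul_of_nonneg_left hgx2 (hπpos x).le
        _ = (∑ k ∈ Finset.range x, v ^ (x - k) * d k)
            * (π x * (∑ k ∈ Finset.range x, (v ^ (x - k) * w k)⁻¹)) := by ring
        _ ≤ (∑ k ∈ Finset.range x, v ^ (x - k) * d k) * Kb :=
            mul_le_mul_of_nonneg_left hB hA0
        _ = Kb * ∑ k ∈ Finset.range x, v ^ (x - k) * d k := by ring
    -- summation over x
    have hAn : ∀ n, (∑ x ∈ Finset.range n, ∑ k ∈ Finset.range x, v ^ (x - k) * d k)
        ≤ (v / (1 - v)) * D := by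
      intro n
      have hswap : (∑ x ∈ Finset.range n, ∑ k ∈ Finset.range x, v ^ (x - k) * d k)
          = ∑ k ∈ Finset.range n, ∑ x ∈ Finset.range n,
            (if k < x then v ^ (x - k) * d k else 0) := by
        calc (∑ x ∈ Finset.range n, ∑ k ∈ Finset.range x, v ^ (x - k) * d k)
            = ∑ x ∈ Finset.range n, ∑ k ∈ Finset.range n,
              (if k < x then v ^ (x - k) * d k else 0) := by
              refine Finset.sum_congr rfl (fun x hx => ?_)
              have hxn := Finset.mem_range.mp hx
              have hfe : Finset.range x = (Finset.range n).filter (· < x) := by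
                ext a
                simp only [Finset.mem_filter, Finset.mem_range]
                omega
              rw [hfe, Finset.sum_filter]
          _ = _ := Finset.sum_comm
      rw [hswap]
      have hpk : ∀ k ∈ Finset.range n, (∑ x ∈ Finset.range n,
          (if k < x then v ^ (x - k) * d k else 0)) ≤ (v / (1 - v)) * d k := by
        intro k _
        have hp1 : ∀ x, (if k < x then v ^ (x - k) * d k else 0)
            = (if k < x then v ^ (x - k) else 0) * d k := by
          intro x
          by_cases h : k < x <;> simp [h]
        rw [Finset.sum_congr rfl (fun x _ => hp1 x), ← Finset.sum_mul]
        exact mul_le_mul_of_nonneg_right (hgeo2 k n) (hdnn k)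
      calc (∑ k ∈ Finset.range n, ∑ x ∈ Finset.range n,
            (if k < x then v ^ (x - k) * d k else 0))
          ≤ ∑ k ∈ Finset.range n, (v / (1 - v)) * d k := Finset.sum_le_sum hpk
        _ = (v / (1 - v)) * ∑ k ∈ Finset.range n, d k := by rw [Finset.mul_sum]
        _ ≤ (v / (1 - v)) * D := by
            apply mul_le_mul_of_nonneg_left _ (div_pos hv0 (by linarith)).le
            exact Summable.sum_le_tsum _ (fun k _ => hdnn k) hdS
    have hfin : 1 + f 0 ^ 2 ≤ Kb * ((v / (1 - v)) * D) := by
      rw [← hgT]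
      apply Real.tsum_le_of_sum_range_le (fun x => mul_nonneg (hπpos x).le (sq_nonneg _))
      intro n
      calc (∑ x ∈ Finset.range n, π x * g x ^ 2)
          ≤ ∑ x ∈ Finset.range n, Kb * ∑ k ∈ Finset.range x, v ^ (x - k) * d k :=
            Finset.sum_le_sum (fun x _ => hkey x)
        _ = Kb * ∑ x ∈ Finset.range n, ∑ k ∈ Finset.range x, v ^ (x - k) * d k := by
            rw [Finset.mul_sum]
        _ ≤ Kb * ((v / (1 - v)) * D) :=
            mul_le_mul_of_nonneg_left (hAn n) hKb0.le
    have hDlow : 1 ≤ KD * D := by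
      have h1 : (1 : ℝ) ≤ 1 + f 0 ^ 2 := by nlinarith [sq_nonneg (f 0)]
      calc (1 : ℝ) ≤ 1 + f 0 ^ 2 := h1
        _ ≤ Kb * ((v / (1 - v)) * D) := hfin
        _ = KD * D := by rw [hKD]; ring
    have hinvKD : 1 / KD ≤ D := by
      rw [div_le_iff₀ hKD0] at *
      nlinarith [hDlow]
    linarith [hDval, hinvKD]
  -- conclude
  have hb1 : (1 : ℝ) - 1 / KD < 1 := by
    have := one_div_pos.mpr hKD0
    linarith
  refine lt_of_le_of_lt (Real.sSup_le (fun r hr => le_trans (hmain r hr)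
    (le_max_left _ _)) (le_max_right _ _)) ?_
  exact max_lt hb1 one_pos
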